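/- arXiv:2301.06720 — 2 statements merged into one kernel-verified Lean document; each statement's English description precedes it below -/
import Mathlib

section
/- Let z be a random vector with positive definite A_zz = E[zz'], let p, Δ₂ be square-integrable random variables, and suppose p = Δ₁ + ω where E[zω] = 0 (model 1 is true). Then E[z(p − Δ₂)] ≠ 0 if and only if E[(Δ̃₁ − Δ̃₂)²] ≠ 0, where Δ̃ₘ is the linear projection of Δₘ onto z. -/
open MeasureTheory Matrix

lemma l2_mul_int {Ω : Type*} [MeasurableSpace Ω] {μ : Measure Ω} {f g : Ω → ℝ}
    (hf : MemLp f 2 μ) (hg : MemLp g 2 μ) :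
    Integrable (fun x => f x * g x) μ := by
  have h1 := (hf.add hg).integrable_sq
  have h2 := (hf.sub hg).integrable_sq
  have h := (h1.sub h2).const_mul (1/4 : ℝ)
  convert h using 1
  funext x
  simp only [Pi.add_apply, Pi.sub_apply]
  ring

/-- If `p = Δ₁ + ω` with `E[zω] = 0` (model 1 true), then model 2 is
falsified, i.e. `E[z(p − Δ₂)] ≠ 0`, iff `E[(Δ̃₁ − Δ̃₂)²] ≠ 0`. -/
theorem stmt_1 {Ω : Type*} [MeasurableSpace Ω] (μ : Measure Ω) [IsProbabilityMeasure μ]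
    {d : ℕ} (z : Ω → Fin d → ℝ) (p Δ₁ Δ₂ ω₀ : Ω → ℝ)
    (hz : ∀ i, MemLp (fun ω => z ω i) 2 μ)
    (hp : MemLp p 2 μ) (hΔ₁ : MemLp Δ₁ 2 μ) (hΔ₂ : MemLp Δ₂ 2 μ)
    (hmodel : ∀ ω, p ω = Δ₁ ω + ω₀ ω)
    (hexog : ∀ i, ∫ ω, z ω i * ω₀ ω ∂μ = 0)
    (Azz : Matrix (Fin d) (Fin d) ℝ)
    (hAzz : Azz = Matrix.of fun i j => ∫ ω, z ω i * z ω j ∂μ)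
    (hpos : Azz.PosDef)
    (Δt₁ Δt₂ : Ω → ℝ)
    (hΔt₁ : Δt₁ = fun ω => z ω ⬝ᵥ (Azz⁻¹ *ᵥ fun i => ∫ ω', z ω' i * Δ₁ ω' ∂μ))
    (hΔt₂ : Δt₂ = fun ω => z ω ⬝ᵥ (Azz⁻¹ *ᵥ fun i => ∫ ω', z ω' i * Δ₂ ω' ∂μ)) :
    (¬ ∀ i, ∫ ω, z ω i * (p ω - Δ₂ ω) ∂μ = 0) ↔
      ∫ ω, (Δt₁ ω - Δt₂ ω) ^ 2 ∂μ ≠ 0 := by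
  classical
  -- ω₀ is L²
  have hω : MemLp ω₀ 2 μ := by
    have : ω₀ = fun x => p x - Δ₁ x := by funext x; rw [hmodel x]; ring
    rw [this]; exact hp.sub hΔ₁
  set c : Fin d → ℝ := fun i => (∫ x, z x i * Δ₁ x ∂μ) - ∫ x, z x i * Δ₂ x ∂μ with hc
  set b : Fin d → ℝ := Azz⁻¹ *ᵥ c with hb
  -- Step 1: the moments equal c
  have hstep1 : ∀ i, ∫ x, z x i * (p x - Δ₂ x) ∂μ = c i := by
    intro i
    have heq : (fun x => z x i * (p x - Δ₂ x))
        = fun x => (z x i * Δ₁ x - z x i * Δ₂ x) + z x i * ω₀ x := by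
      funext x; rw [hmodel x]; ring
    have h1 := l2_mul_int (hz i) hΔ₁
    have h2 := l2_mul_int (hz i) hΔ₂
    have h3 := l2_mul_int (hz i) hω
    have h12 : Integrable (fun x => z x i * Δ₁ x - z x i * Δ₂ x) μ := h1.sub h2
    rw [heq, integral_add h12 h3, hexog i, add_zero, integral_sub h1 h2]
  -- Δt₁ - Δt₂ = z ⬝ b
  have hdiff : ∀ x, Δt₁ x - Δt₂ x = z x ⬝ᵥ b := by
    intro x
    rw [hΔt₁, hΔt₂, hb]
    simp only [← dotProduct_sub, ← mulVec_sub]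
    congr 1
  -- Step 2: ∫ (z⬝b)² = b ⬝ (Azz *ᵥ b)
  have hstep2 : ∫ x, (Δt₁ x - Δt₂ x) ^ 2 ∂μ = b ⬝ᵥ (Azz *ᵥ b) := by
    have hexp : (fun x => (Δt₁ x - Δt₂ x) ^ 2)
        = fun x => ∑ i, ∑ j, b i * b j * (z x i * z x j) := by
      funext x
      rw [hdiff x]
      simp only [dotProduct, Finset.sum_mul, Finset.mul_sum, sq]
      rw [Finset.sum_comm]
      congr 1; funext i; congr 1; funext j; ring
    rw [hexp]
    rw [integral_finset_sum _ (fun i _ => integrable_finset_sum _ (fun j _ =>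
      (l2_mul_int (hz i) (hz j)).const_mul (b i * b j)))]
    have : ∀ i, ∫ x, ∑ j, b i * b j * (z x i * z x j) ∂μ
        = ∑ j, b i * b j * (Azz i j) := by
      intro i
      rw [integral_finset_sum _ (fun j _ => (l2_mul_int (hz i) (hz j)).const_mul (b i * b j))]
      refine Finset.sum_congr rfl fun j _ => ?_
      rw [integral_const_mul, hAzz]
      rfl
    simp only [this]
    simp only [dotProduct, mulVec, dotProduct]
    rw [Finset.sum_comm]
    congr 1; funext i; rw [Finset.mul_sum]
    congr 1; funext j
    have hsym : Azz j i = Azz i j := by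
      rw [hAzz]; simp only [of_apply]; congr 1; funext x; ring
    rw [hsym]; ring
  -- Azz *ᵥ b = c
  have hunit : IsUnit Azz := hpos.isUnit
  haveI := hunit.invertible
  have hAb : Azz *ᵥ b = c := by
    rw [hb, mulVec_mulVec, Matrix.mul_nonsing_inv _ (isUnit_iff_isUnit_det _ |>.1 hunit),
      one_mulVec]
  -- c = 0 ↔ b = 0
  have hcb : c = 0 ↔ b = 0 := by
    constructor
    · intro h; rw [hb, h, mulVec_zero]
    · intro h; rw [← hAb, h, mulVec_zero]
  rw [hstep2, hAb]
  simp only [hstep1]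
  constructor
  · intro h hbc
    apply h
    intro i
    by_contra hci
    have hcne : c ≠ 0 := fun h0 => hci (by rw [h0]; rfl)
    have hbne : b ≠ 0 := fun h0 => hcne (hcb.mpr h0)
    have := hpos.dotProduct_mulVec_pos hbne
    simp only [RCLike.star_def, star_trivial] at this
    rw [hAb] at this
    exact this.ne' hbc
  · intro h hall
    apply h
    have hc0 : c = 0 := funext hall
    rw [hc0]
    simp [dotProduct]
end

section
/- Let p = Δ*θ₀ + ω₀ with E[zω₀] = 0 and A_zz = E[zz'] positive definite. For observed markup vector Δ (possibly ≠ Δ*), define for each θ the population moment 𝑔(θ) = E[z(p − Δ'θ)] and 𝒬(θ) = 𝑔(θ)'A_zz⁻¹𝑔(θ). Then 𝒬(θₘ) = E[(Δ̃*₀ − Δ̃ₘ)²], where Δ̃*₀ = z'A_zz⁻¹E[zΔ*']θ₀ and Δ̃ₘ = z'A_zz⁻¹E[zΔ']θₘ. -/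
open MeasureTheory Matrix

lemma memLp_mul_integrable {Ω : Type*} [MeasurableSpace Ω] {μ : Measure Ω} {f g : Ω → ℝ}
    (hf : MemLp f 2 μ) (hg : MemLp g 2 μ) : Integrable (fun ω => f ω * g ω) μ := by
  rw [← memLp_one_iff_integrable]
  exact hg.smul hf

/-- With `p = Δ*'θ₀ + ω₀`, `E[zω₀] = 0`, moment function
`𝑔(θ) = E[z(p − Δ'θ)]` and GMM fit `𝒬(θ) = 𝑔(θ)'A_zz⁻¹𝑔(θ)`, we have
`𝒬(θₘ) = E[(Δ̃*₀ − Δ̃ₘ)²]` for the projected (predicted) markups. -/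
theorem stmt_8 {Ω : Type*} [MeasurableSpace Ω] (μ : Measure Ω) [IsProbabilityMeasure μ]
    {d : ℕ} (z : Ω → Fin d → ℝ) (Δstar Δ : Ω → Fin 2 → ℝ)
    (p ω₀ : Ω → ℝ) (θ₀ θₘ : Fin 2 → ℝ)
    (hz : ∀ i, MemLp (fun ω => z ω i) 2 μ)
    (hΔstar : ∀ k, MemLp (fun ω => Δstar ω k) 2 μ)
    (hΔ : ∀ k, MemLp (fun ω => Δ ω k) 2 μ)
    (hp : MemLp p 2 μ)
    (hmodel : ∀ ω, p ω = Δstar ω ⬝ᵥ θ₀ + ω₀ ω)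
    (hexog : ∀ i, ∫ ω, z ω i * ω₀ ω ∂μ = 0)
    (Azz : Matrix (Fin d) (Fin d) ℝ)
    (hAzz : Azz = Matrix.of fun i j => ∫ ω, z ω i * z ω j ∂μ)
    (hpos : Azz.PosDef)
    (g : Fin d → ℝ)
    (hg : g = fun i => ∫ ω, z ω i * (p ω - Δ ω ⬝ᵥ θₘ) ∂μ)
    (Q : ℝ) (hQ : Q = g ⬝ᵥ (Azz⁻¹ *ᵥ g))
    (Δt₀ Δtₘ : Ω → ℝ)
    (hΔt₀ : Δt₀ = fun ω =>
      z ω ⬝ᵥ (Azz⁻¹ *ᵥ ((Matrix.of fun i k => ∫ ω', z ω' i * Δstar ω' k ∂μ) *ᵥ θ₀)))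
    (hΔtₘ : Δtₘ = fun ω =>
      z ω ⬝ᵥ (Azz⁻¹ *ᵥ ((Matrix.of fun i k => ∫ ω', z ω' i * Δ ω' k ∂μ) *ᵥ θₘ))) :
    Q = ∫ ω, (Δt₀ ω - Δtₘ ω) ^ 2 ∂μ := by
  -- notation
  set Bs : Matrix (Fin d) (Fin 2) ℝ := Matrix.of fun i k => ∫ ω', z ω' i * Δstar ω' k ∂μ with hBs
  set B : Matrix (Fin d) (Fin 2) ℝ := Matrix.of fun i k => ∫ ω', z ω' i * Δ ω' k ∂μ with hB
  set v : Fin d → ℝ := Bs *ᵥ θ₀ - B *ᵥ θₘ with hv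
  set a : Fin d → ℝ := Azz⁻¹ *ᵥ v with ha
  -- Memℒp facts
  have hds : MemLp (fun ω => Δstar ω ⬝ᵥ θ₀) 2 μ := by
    have : (fun ω => Δstar ω ⬝ᵥ θ₀) = fun ω => θ₀ 0 * Δstar ω 0 + θ₀ 1 * Δstar ω 1 := by
      funext ω; simp [dotProduct, Fin.sum_univ_two]; ring
    rw [this]; exact ((hΔstar 0).const_mul _).add ((hΔstar 1).const_mul _)
  have hdm : MemLp (fun ω => Δ ω ⬝ᵥ θₘ) 2 μ := by
    have : (fun ω => Δ ω ⬝ᵥ θₘ) = fun ω => θₘ 0 * Δ ω 0 + θₘ 1 * Δ ω 1 := by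
      funext ω; simp [dotProduct, Fin.sum_univ_two]; ring
    rw [this]; exact ((hΔ 0).const_mul _).add ((hΔ 1).const_mul _)
  have hω : MemLp ω₀ 2 μ := by
    have : ω₀ = fun ω => p ω - Δstar ω ⬝ᵥ θ₀ := by
      funext ω; have := hmodel ω; linarith
    rw [this]; exact hp.sub hds
  -- g = v
  have hgv : g = v := by
    funext i
    have h1 : Integrable (fun ω => z ω i * (Δstar ω ⬝ᵥ θ₀)) μ :=
      memLp_mul_integrable (hz i) hds
    have h2 : Integrable (fun ω => z ω i * ω₀ ω) μ :=
      memLp_mul_integrable (hz i) hω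
    have h3 : Integrable (fun ω => z ω i * (Δ ω ⬝ᵥ θₘ)) μ :=
      memLp_mul_integrable (hz i) hdm
    have hik : ∀ k, Integrable (fun ω => z ω i * Δstar ω k) μ := fun k =>
      memLp_mul_integrable (hz i) (hΔstar k)
    have hik' : ∀ k, Integrable (fun ω => z ω i * Δ ω k) μ := fun k =>
      memLp_mul_integrable (hz i) (hΔ k)
    have e1 : (∫ ω, z ω i * (Δstar ω ⬝ᵥ θ₀) ∂μ) = (Bs *ᵥ θ₀) i := by
      have h : (fun ω => z ω i * (Δstar ω ⬝ᵥ θ₀)) =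
          fun ω => (z ω i * Δstar ω 0) * θ₀ 0 + (z ω i * Δstar ω 1) * θ₀ 1 := by
        funext ω; simp [dotProduct, Fin.sum_univ_two]; ring
      rw [h, integral_add ((hik 0).mul_const _) ((hik 1).mul_const _),
        integral_mul_const, integral_mul_const]
      simp [mulVec, dotProduct, Fin.sum_univ_two, hBs]
    have e2 : (∫ ω, z ω i * (Δ ω ⬝ᵥ θₘ) ∂μ) = (B *ᵥ θₘ) i := by
      have h : (fun ω => z ω i * (Δ ω ⬝ᵥ θₘ)) =
          fun ω => (z ω i * Δ ω 0) * θₘ 0 + (z ω i * Δ ω 1) * θₘ 1 := by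
        funext ω; simp [dotProduct, Fin.sum_univ_two]; ring
      rw [h, integral_add ((hik' 0).mul_const _) ((hik' 1).mul_const _),
        integral_mul_const, integral_mul_const]
      simp [mulVec, dotProduct, Fin.sum_univ_two, hB]
    have : (fun ω => z ω i * (p ω - Δ ω ⬝ᵥ θₘ)) =
        fun ω => (z ω i * (Δstar ω ⬝ᵥ θ₀) + z ω i * ω₀ ω) - z ω i * (Δ ω ⬝ᵥ θₘ) := by
      funext ω; rw [hmodel ω]; ring
    rw [hg]
    simp only [this]
    rw [integral_sub (f := fun ω => z ω i * (Δstar ω ⬝ᵥ θ₀) + z ω i * ω₀ ω) (h1.add h2) h3,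
      integral_add h1 h2, hexog i, e1, e2]
    simp [hv]
  -- RHS pointwise form
  have hdiff : ∀ ω, Δt₀ ω - Δtₘ ω = z ω ⬝ᵥ a := by
    intro ω
    rw [hΔt₀, hΔtₘ, ha, hv, Matrix.mulVec_sub, dotProduct_sub]
  -- invertibility
  have hAinv : Azz *ᵥ a = v := by
    rw [ha, Matrix.mulVec_mulVec,
      Matrix.mul_nonsing_inv Azz ((Matrix.isUnit_iff_isUnit_det Azz).mp hpos.isUnit),
      Matrix.one_mulVec]
  -- integral of square
  have hsum : ∀ ω, (z ω ⬝ᵥ a) ^ 2 = ∑ i, ∑ j, a i * a j * (z ω i * z ω j) := by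
    intro ω
    rw [sq, dotProduct, Finset.sum_mul_sum]
    congr 1; funext i; congr 1; funext j; ring
  have hint : (∫ ω, (z ω ⬝ᵥ a) ^ 2 ∂μ) = ∑ i, ∑ j, a i * a j * (Azz i j) := by
    simp only [hsum]
    rw [integral_finset_sum _ (fun i _ => integrable_finset_sum _ (fun j _ =>
      (memLp_mul_integrable (hz i) (hz j)).const_mul _))]
    refine Finset.sum_congr rfl fun i _ => ?_
    rw [integral_finset_sum _ (fun j _ => (memLp_mul_integrable (hz i) (hz j)).const_mul _)]
    refine Finset.sum_congr rfl fun j _ => ?_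
    rw [integral_const_mul, hAzz]; rfl
  have hquad : (∑ i, ∑ j, a i * a j * (Azz i j)) = a ⬝ᵥ (Azz *ᵥ a) := by
    simp only [dotProduct, mulVec, Finset.mul_sum]
    refine Finset.sum_congr rfl fun i _ => Finset.sum_congr rfl fun j _ => by ring
  calc Q = g ⬝ᵥ (Azz⁻¹ *ᵥ g) := hQ
    _ = v ⬝ᵥ a := by rw [hgv, ha]
    _ = a ⬝ᵥ v := dotProduct_comm _ _
    _ = a ⬝ᵥ (Azz *ᵥ a) := by rw [hAinv]
    _ = ∫ ω, (z ω ⬝ᵥ a) ^ 2 ∂μ := by rw [hint, hquad]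
    _ = ∫ ω, (Δt₀ ω - Δtₘ ω) ^ 2 ∂μ := by simp only [hdiff]
end
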